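/- Let c > 1, σ > 0, 0 < α < (c-1)/(4σ), β = 3α, κ ∈ (0,1), A = 1/(2(c-1-4ασ)), γ² = σ/(2-κ²), φ₀² = 2γ²/A. Let d satisfy d'' = (2-κ²)d - 2d³ and d'² = (1-d²)(d² - (1-κ²)) (the dn ODEs), and set φ(x) = φ₀ d(γx), ψ = Aφ². Then the pair (φ, ψ) satisfies (1-c)ψ + βψ² + αψ'' + φ²/2 = b with b = -4α(1-κ²)γ⁴, and in particular b < 0. -/

import Mathlib

lemma dnoidal_key (α κ γ c A φ₀ u w : ℝ)
    (e1 : w ^ 2 = (1 - u ^ 2) * (u ^ 2 - (1 - κ ^ 2)))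
    (e2 : A * φ₀ ^ 2 = 2 * γ ^ 2)
    (e4 : φ₀ ^ 2 = 4 * γ ^ 2 * (c - 1 - 4 * α * (γ ^ 2 * (2 - κ ^ 2)))) :
    (1 - c) * (A * (φ₀ * u) ^ 2) + 3 * α * (A * (φ₀ * u) ^ 2) ^ 2
      + α * (2 * A * φ₀ ^ 2 * γ ^ 2 * (w ^ 2 + u * ((2 - κ ^ 2) * u - 2 * u ^ 3)))
      + (φ₀ * u) ^ 2 / 2 = -4 * α * (1 - κ ^ 2) * γ ^ 4 := by
  linear_combination (2 * α * γ ^ 2 * (A * φ₀ ^ 2)) * e1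
    + ((1 - c) * u ^ 2 + 3 * α * u ^ 4 * (A * φ₀ ^ 2 + 2 * γ ^ 2)
        + 2 * α * γ ^ 2 * ((1 - u ^ 2) * (u ^ 2 - (1 - κ ^ 2)) + (2 - κ ^ 2) * u ^ 2 - 2 * u ^ 4)) * e2
    + (u ^ 2 / 2) * e4

theorem dnoidal_solves_second_equation (c σ α β κ A γ φ₀ b : ℝ)
    (hc : 1 < c) (hσ : 0 < σ) (hα0 : 0 < α) (hα : α < (c - 1) / (4 * σ))
    (hβ : β = 3 * α) (hκ0 : 0 < κ) (hκ1 : κ < 1)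
    (hA : A = 1 / (2 * (c - 1 - 4 * α * σ)))
    (hγ : γ ^ 2 = σ / (2 - κ ^ 2)) (hφ₀ : φ₀ ^ 2 = 2 * γ ^ 2 / A)
    (hb : b = -4 * α * (1 - κ ^ 2) * γ ^ 4)
    (d : ℝ → ℝ) (hd : ContDiff ℝ 2 d)
    (hode : ∀ y, deriv (deriv d) y = (2 - κ ^ 2) * d y - 2 * (d y) ^ 3)
    (hode1 : ∀ y, (deriv d y) ^ 2 = (1 - (d y) ^ 2) * ((d y) ^ 2 - (1 - κ ^ 2))) :
    (∀ x, (1 - c) * (A * (φ₀ * d (γ * x)) ^ 2)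
        + β * (A * (φ₀ * d (γ * x)) ^ 2) ^ 2
        + α * deriv (deriv (fun x => A * (φ₀ * d (γ * x)) ^ 2)) x
        + (φ₀ * d (γ * x)) ^ 2 / 2 = b) ∧ b < 0 := by
  have hκ2 : (0:ℝ) < 2 - κ ^ 2 := by nlinarith
  have h1k : (0:ℝ) < 1 - κ ^ 2 := by nlinarith
  have hden : 0 < c - 1 - 4 * α * σ := by
    have h := (lt_div_iff₀ (by positivity : (0:ℝ) < 4 * σ)).mp hα
    nlinarith
  have hApos : 0 < A := by rw [hA]; positivity
  have hγ2 : 0 < γ ^ 2 := hγ ▸ div_pos hσ hκ2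
  have hσγ : σ = γ ^ 2 * (2 - κ ^ 2) := by
    field_simp at hγ; linarith
  have e2 : A * φ₀ ^ 2 = 2 * γ ^ 2 := by
    rw [hφ₀]; field_simp
  have e4 : φ₀ ^ 2 = 4 * γ ^ 2 * (c - 1 - 4 * α * (γ ^ 2 * (2 - κ ^ 2))) := by
    rw [hφ₀, hA, ← hσγ]; field_simp; ring
  -- calculus
  have hdiff : Differentiable ℝ d := hd.differentiable two_ne_zero
  have hd' : Differentiable ℝ (deriv d) := by
    have h := (contDiff_succ_iff_deriv (n := 1)).mp (by exact_mod_cast hd)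
    exact h.2.2.differentiable one_ne_zero
  have hin : ∀ x : ℝ, HasDerivAt (fun x => γ * x) γ x := fun x => by
    simpa using (hasDerivAt_id x).const_mul γ
  have h1 : ∀ x : ℝ, HasDerivAt (fun x => A * (φ₀ * d (γ * x)) ^ 2)
      (2 * A * φ₀ ^ 2 * γ * (d (γ * x) * deriv d (γ * x))) x := by
    intro x
    have hdc : HasDerivAt (fun x => d (γ * x)) (deriv d (γ * x) * γ) x :=
      ((hdiff (γ * x)).hasDerivAt).comp x (hin x)
    have := ((hdc.const_mul φ₀).pow 2).const_mul A
    exact this.congr_deriv (by ring)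
  have hderiv1 : deriv (fun x => A * (φ₀ * d (γ * x)) ^ 2)
      = fun x => 2 * A * φ₀ ^ 2 * γ * (d (γ * x) * deriv d (γ * x)) := by
    funext x; exact (h1 x).deriv
  have h2 : ∀ x : ℝ, deriv (deriv (fun x => A * (φ₀ * d (γ * x)) ^ 2)) x
      = 2 * A * φ₀ ^ 2 * γ ^ 2 *
        ((deriv d (γ * x)) ^ 2 + d (γ * x) * deriv (deriv d) (γ * x)) := by
    intro x
    rw [hderiv1]
    have hdc : HasDerivAt (fun x => d (γ * x)) (deriv d (γ * x) * γ) x :=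
      ((hdiff (γ * x)).hasDerivAt).comp x (hin x)
    have hdc' : HasDerivAt (fun x => deriv d (γ * x)) (deriv (deriv d) (γ * x) * γ) x :=
      ((hd' (γ * x)).hasDerivAt).comp x (hin x)
    have := ((hdc.mul hdc').const_mul (2 * A * φ₀ ^ 2 * γ)).deriv
    exact this.trans (by ring)
  refine ⟨fun x => ?_, ?_⟩
  · rw [h2 x, hβ, hb]
    have key := dnoidal_key α κ γ c A φ₀ (d (γ * x)) (deriv d (γ * x))
      (hode1 (γ * x)) e2 e4
    linear_combination key + 2 * α * A * φ₀ ^ 2 * γ ^ 2 * (d (γ * x)) * (hode (γ * x))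
  · rw [hb]
    have hγ4 : 0 < γ ^ 4 := by nlinarith
    nlinarith [mul_pos (mul_pos (mul_pos (by norm_num : (0:ℝ) < 4) hα0) h1k) hγ4]
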